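/- arXiv:1312.2172 — 3 statements merged into one kernel-verified Lean document; each statement's English description precedes it below -/
import Mathlib

section
/- Let q be a real number with 0 < q < 1, let v be a nonzero integer, and let t be a positive rational number. Define f : ℂ∖{0} → ℂ by f(a) = (a^v; q^t)_∞ · (q^t a^{−v}; q^t)_∞, where q^t denotes the real power. Suppose there exist integers α and w, a number ρ ∈ {0,1}, and a rational number s such that f(a q^α) = (−1)^ρ · a^{−w} · q^{−s} · f(a) for all a ∈ ℂ∖{0}. Then v divides w, and there exists an integer n with α·v = n·t (i.e., αv is an integer multiple of t). -/
/-- The q-Pochhammer symbol of infinite order: `(x; Q)_∞ = ∏_{k=0}^∞ (1 - x Q^k)`. -/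
noncomputable def qPoch (x Q : ℂ) : ℂ := ∏' k : ℕ, (1 - x * Q ^ k)

/-- The one-variable theta function `f(a) = (a^v; q^t)_∞ (q^t a^{-v}; q^t)_∞`,
where `q^t` is the real power. -/
noncomputable def thetaOne (q : ℝ) (t : ℚ) (v : ℤ) (a : ℂ) : ℂ :=
  qPoch (a ^ v) ((q ^ (t : ℝ) : ℝ) : ℂ)
    * qPoch (((q ^ (t : ℝ) : ℝ) : ℂ) * a ^ (-v)) ((q ^ (t : ℝ) : ℝ) : ℂ)

open Complex Filter Finset

lemma qPoch_eq_zero_iff (x : ℂ) {Q : ℂ} (hQ : ‖Q‖ < 1) :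
    qPoch x Q = 0 ↔ ∃ k : ℕ, x * Q ^ k = 1 := by
  set f : ℕ → ℂ := fun k => 1 - x * Q ^ k with hfdef
  have hsum : Summable (fun k : ℕ => ‖x * Q ^ k‖) := by
    simpa [norm_mul, norm_pow] using
      (summable_geometric_of_lt_one (norm_nonneg Q) hQ).mul_left ‖x‖
  have h0 : Tendsto (fun k : ℕ => ‖x * Q ^ k‖) atTop (nhds 0) :=
    hsum.tendsto_atTop_zero
  obtain ⟨N, hN⟩ := eventually_atTop.mp
    (h0.eventually_lt_const (by norm_num : (0:ℝ) < 1/2))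
  have hg0 : ∀ k, f (k + N) ≠ 0 := by
    intro k h
    have h1 : x * Q ^ (k + N) = 1 := by
      have := sub_eq_zero.mp h
      linear_combination -this
    have h2 := hN (k + N) (Nat.le_add_left _ _)
    rw [h1] at h2
    norm_num at h2
  have hlogsum : Summable (fun k => Complex.log (f (k + N))) := by
    apply Summable.of_norm_bounded (g := fun k => 3/2 * ‖x * Q ^ (k + N)‖)
    · exact ((summable_nat_add_iff N).2 hsum).mul_left _
    · intro k
      have h2 : ‖-(x * Q ^ (k + N))‖ ≤ 1/2 := by
        simpa using (hN (k + N) (Nat.le_add_left _ _)).le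
      simpa [hfdef, sub_eq_add_neg] using Complex.norm_log_one_add_half_le_self h2
  have hmultail : Multipliable (fun k => f (k + N)) :=
    Complex.multipliable_of_summable_log hlogsum
  have htail_ne : (∏' k, f (k + N)) ≠ 0 := by
    have h := Complex.cexp_tsum_eq_tprod (f := fun k => f (k + N)) hg0 hlogsum
    rw [← h]
    exact Complex.exp_ne_zero _
  have hsplit : ((∏ i ∈ Finset.range N, f i) * ∏' i, f (i + N)) = ∏' i, f i :=
    Multipliable.prod_mul_tprod_nat_mul' hmultail
  have hqp : qPoch x Q = (∏ i ∈ Finset.range N, f i) * ∏' i, f (i + N) := by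
    rw [hsplit]; rfl
  constructor
  · intro h
    rw [hqp] at h
    rcases mul_eq_zero.1 h with h | h
    · obtain ⟨k, -, hk⟩ := Finset.prod_eq_zero_iff.1 h
      refine ⟨k, ?_⟩
      have := sub_eq_zero.mp hk
      linear_combination -this
    · exact absurd h htail_ne
  · rintro ⟨k, hk⟩
    have hkN : k < N := by
      by_contra hge
      have h2 := hN k (le_of_not_gt hge)
      rw [hk] at h2
      norm_num at h2
    rw [hqp]
    apply mul_eq_zero_of_left
    exact Finset.prod_eq_zero (Finset.mem_range.2 hkN) (by simp [hfdef, hk])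

lemma thetaOne_eq_zero_iff {q : ℝ} (hq0 : 0 < q) (hq1 : q < 1) {t : ℚ} (ht : 0 < t)
    (v : ℤ) {a : ℂ} (ha : a ≠ 0) :
    thetaOne q t v a = 0 ↔ ∃ m : ℤ, a ^ v = ((q ^ (t : ℝ) : ℝ) : ℂ) ^ m := by
  set Q : ℝ := q ^ (t : ℝ) with hQdef
  have hQ0 : 0 < Q := Real.rpow_pos_of_pos hq0 _
  have hQ1 : Q < 1 := Real.rpow_lt_one hq0.le hq1 (by exact_mod_cast ht)
  have hQc : ‖(Q : ℂ)‖ < 1 := by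
    rw [Complex.norm_real, Real.norm_eq_abs, abs_of_pos hQ0]; exact hQ1
  have hQne : (Q : ℂ) ≠ 0 := by exact_mod_cast hQ0.ne'
  rw [thetaOne, mul_eq_zero, qPoch_eq_zero_iff _ hQc, qPoch_eq_zero_iff _ hQc]
  constructor
  · rintro (⟨k, hk⟩ | ⟨k, hk⟩)
    · refine ⟨-(k : ℤ), ?_⟩
      rw [zpow_neg, zpow_natCast]
      exact eq_inv_of_mul_eq_one_left hk
    · refine ⟨(k : ℤ) + 1, ?_⟩
      have h1 : a ^ v * a ^ (-v) = 1 := by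
        rw [← zpow_add₀ ha]; simp
      calc a ^ v = a ^ v * ((Q : ℂ) * a ^ (-v) * (Q : ℂ) ^ k) := by rw [hk, mul_one]
        _ = (a ^ v * a ^ (-v)) * ((Q : ℂ) * (Q : ℂ) ^ k) := by ring
        _ = (Q : ℂ) ^ ((k : ℤ) + 1) := by
            rw [h1, one_mul, zpow_add₀ hQne, zpow_natCast, zpow_one]; ring
  · rintro ⟨m, hm⟩
    rcases le_or_gt m 0 with hm0 | hm0
    · left
      refine ⟨(-m).toNat, ?_⟩
      rw [hm, ← zpow_natCast (Q : ℂ) (-m).toNat, Int.toNat_of_nonneg (by omega),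
        ← zpow_add₀ hQne]
      simp
    · right
      refine ⟨(m - 1).toNat, ?_⟩
      have hav : a ^ (-v) = (Q : ℂ) ^ (-m) := by
        rw [zpow_neg, hm, ← zpow_neg]
      rw [hav, ← zpow_natCast (Q : ℂ) (m - 1).toNat, Int.toNat_of_nonneg (by omega)]
      calc (Q : ℂ) * (Q : ℂ) ^ (-m) * (Q : ℂ) ^ (m - 1)
          = (Q : ℂ) ^ (1 : ℤ) * (Q : ℂ) ^ (-m) * (Q : ℂ) ^ (m - 1) := by rw [zpow_one]
        _ = (Q : ℂ) ^ (1 + -m + (m - 1)) := by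
            rw [zpow_add₀ hQne, zpow_add₀ hQne]
        _ = 1 := by
            have h0 : (1 : ℤ) + -m + (m - 1) = 0 := by ring
            rw [h0, zpow_zero]

lemma thetaOne_mul_root (q : ℝ) (t : ℚ) (v : ℤ) {ζ : ℂ} (hζ : ζ ^ v = 1) (x : ℂ) :
    thetaOne q t v (x * ζ) = thetaOne q t v x := by
  have hζv : ζ ^ (-v) = 1 := by rw [zpow_neg, hζ, inv_one]
  rw [thetaOne, thetaOne, mul_zpow, mul_zpow, hζ, hζv, mul_one, mul_one]

/-- If `f(a) = (a^v, q^t/a^v; q^t)_∞` satisfies a contiguous relation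
`f(a q^α) = (-1)^ρ a^{-w} q^{-s} f(a)`, then `v ∣ w` and `α v` is an integer
multiple of `t`. -/
theorem contiguous_divisibility (q : ℝ) (hq0 : 0 < q) (hq1 : q < 1)
    (v : ℤ) (hv : v ≠ 0) (t : ℚ) (ht : 0 < t)
    (α w : ℤ) (ρ : ℕ) (hρ : ρ = 0 ∨ ρ = 1) (s : ℚ)
    (hrel : ∀ a : ℂ, a ≠ 0 →
      thetaOne q t v (a * (q : ℂ) ^ α)
        = (-1 : ℂ) ^ ρ * a ^ (-w) * ((q ^ (-(s : ℝ)) : ℝ) : ℂ) * thetaOne q t v a) :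
    v ∣ w ∧ ∃ n : ℤ, (α : ℚ) * (v : ℚ) = (n : ℚ) * t := by
  have hqC : (q : ℂ) ≠ 0 := by exact_mod_cast hq0.ne'
  have hqα : (q : ℂ) ^ α ≠ 0 := zpow_ne_zero _ hqC
  have hC : ((-1 : ℂ)) ^ ρ ≠ 0 := pow_ne_zero _ (by norm_num)
  have hqs : ((q ^ (-(s : ℝ)) : ℝ) : ℂ) ≠ 0 := by
    exact_mod_cast (Real.rpow_pos_of_pos hq0 _).ne'
  set Q : ℝ := q ^ (t : ℝ) with hQdef
  have hQ0 : 0 < Q := Real.rpow_pos_of_pos hq0 _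
  have hQ1 : Q < 1 := Real.rpow_lt_one hq0.le hq1 (by exact_mod_cast ht)
  have hvR : (v : ℝ) ≠ 0 := by exact_mod_cast hv
  have hvC : (v : ℂ) ≠ 0 := by exact_mod_cast hv
  have rpow_inj : ∀ {b : ℝ}, 0 < b → b < 1 → ∀ {x y : ℝ}, b ^ x = b ^ y → x = y := by
    intro b hb0 hb1 x y hxy
    by_contra hne
    rcases lt_or_gt_of_ne hne with h | h
    · exact absurd hxy.le (not_le.2 ((Real.rpow_lt_rpow_left_iff_of_base_lt_one hb0 hb1).2 h))
    · exact absurd hxy.ge (not_le.2 ((Real.rpow_lt_rpow_left_iff_of_base_lt_one hb0 hb1).2 h))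
  constructor
  · -- v ∣ w
    set ζ : ℂ := Complex.exp (2 * Real.pi * I / v) with hζdef
    have hζ0 : ζ ≠ 0 := Complex.exp_ne_zero _
    have hvmul : (v : ℂ) * (2 * Real.pi * I / v) = 2 * Real.pi * I := by
      field_simp
    have hζv : ζ ^ v = 1 := by
      rw [hζdef, ← Complex.exp_int_mul, hvmul, Complex.exp_two_pi_mul_I]
    -- point where theta is nonzero
    set r : ℝ := Q ^ ((2 * (v : ℝ))⁻¹) with hrdef
    have hr0 : 0 < r := Real.rpow_pos_of_pos hQ0 _
    have hrC : (r : ℂ) ≠ 0 := by exact_mod_cast hr0.ne'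
    have hrvR : r ^ (v : ℤ) = Q ^ ((2 : ℝ)⁻¹) := by
      rw [← Real.rpow_intCast r v, hrdef, ← Real.rpow_mul hQ0.le]
      congr 1
      field_simp
    have hrv : ((r : ℂ)) ^ v = ((Q ^ ((2 : ℝ)⁻¹) : ℝ) : ℂ) := by
      rw [← Complex.ofReal_zpow, hrvR]
    have hfr : thetaOne q t v (r : ℂ) ≠ 0 := by
      rw [Ne, thetaOne_eq_zero_iff hq0 hq1 ht v hrC]
      rintro ⟨m, hm⟩
      rw [hrv, ← Complex.ofReal_zpow] at hm
      have hm' : Q ^ ((2 : ℝ)⁻¹) = Q ^ (m : ℤ) := by exact_mod_cast hm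
      rw [← Real.rpow_intCast Q m] at hm'
      have h12 := rpow_inj hQ0 hQ1 hm'
      have h2 : (2 * m : ℤ) = 1 := by
        have : (2 : ℝ) * m = 1 := by
          rw [← h12]; norm_num
        exact_mod_cast this
      omega
    have h1 := hrel (r : ℂ) hrC
    have h2 := hrel ((r : ℂ) * ζ) (mul_ne_zero hrC hζ0)
    rw [mul_right_comm (r : ℂ) ζ ((q : ℂ) ^ α), thetaOne_mul_root q t v hζv,
      thetaOne_mul_root q t v hζv, h1, mul_zpow] at h2
    have hprod : (-1 : ℂ) ^ ρ * (r : ℂ) ^ (-w) * ((q ^ (-(s : ℝ)) : ℝ) : ℂ)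
        * thetaOne q t v (r : ℂ) ≠ 0 :=
      mul_ne_zero (mul_ne_zero (mul_ne_zero hC (zpow_ne_zero _ hrC)) hqs) hfr
    have h3 : (1 : ℂ) * ((-1 : ℂ) ^ ρ * (r : ℂ) ^ (-w) * ((q ^ (-(s : ℝ)) : ℝ) : ℂ)
          * thetaOne q t v (r : ℂ))
        = ζ ^ (-w) * ((-1 : ℂ) ^ ρ * (r : ℂ) ^ (-w) * ((q ^ (-(s : ℝ)) : ℝ) : ℂ)
          * thetaOne q t v (r : ℂ)) := by
      linear_combination h2
    have hζw : ζ ^ w = 1 := by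
      have := (mul_right_cancel₀ hprod h3).symm
      rw [zpow_neg, inv_eq_one] at this
      exact this
    have hexp : Complex.exp ((w : ℂ) * (2 * Real.pi * I / v)) = 1 := by
      rw [Complex.exp_int_mul, ← hζdef]
      exact hζw
    obtain ⟨n, hn⟩ := Complex.exp_eq_one_iff.mp hexp
    have h2πI : (2 * (Real.pi : ℂ) * I) ≠ 0 :=
      mul_ne_zero (mul_ne_zero two_ne_zero (Complex.ofReal_ne_zero.2 Real.pi_ne_zero))
        Complex.I_ne_zero
    have hwnv : (w : ℂ) = (n : ℂ) * v := by
      have h6 : (w : ℂ) * (2 * Real.pi * I) = ((n : ℂ) * v) * (2 * Real.pi * I) := by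
        calc (w : ℂ) * (2 * Real.pi * I)
            = (w : ℂ) * (2 * Real.pi * I / v) * v := by
              field_simp
          _ = (n : ℂ) * (2 * Real.pi * I) * v := by rw [hn]
          _ = ((n : ℂ) * v) * (2 * Real.pi * I) := by ring
      have := mul_right_cancel₀ h2πI h6
      exact this
    have hw : w = n * v := by exact_mod_cast hwnv
    exact ⟨n, by rw [hw]; ring⟩
  · -- ∃ n
    set a₀ : ℂ := ((q : ℂ) ^ α)⁻¹ with ha₀def
    have ha₀0 : a₀ ≠ 0 := inv_ne_zero hqα
    have h1 := hrel a₀ ha₀0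
    rw [ha₀def, inv_mul_cancel₀ hqα] at h1
    have hθ1 : thetaOne q t v 1 = 0 := by
      rw [thetaOne_eq_zero_iff hq0 hq1 ht v one_ne_zero]
      exact ⟨0, by simp⟩
    rw [hθ1] at h1
    have hfa₀ : thetaOne q t v a₀ = 0 := by
      by_contra hne
      exact (mul_ne_zero (mul_ne_zero (mul_ne_zero hC (zpow_ne_zero _ ha₀0)) hqs) hne) h1.symm
    obtain ⟨m, hm⟩ := (thetaOne_eq_zero_iff hq0 hq1 ht v ha₀0).1 hfa₀
    have ha₀v : a₀ ^ v = (q : ℂ) ^ ((-α) * v) := by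
      rw [ha₀def, ← zpow_neg, ← zpow_mul]
    rw [ha₀v] at hm
    have hmR : (q : ℝ) ^ ((-α) * v) = Q ^ (m : ℤ) := by exact_mod_cast hm
    have hmR' : q ^ (((-α) * v : ℤ) : ℝ) = q ^ ((t : ℝ) * (m : ℤ)) := by
      rw [Real.rpow_intCast, hmR, hQdef, ← Real.rpow_intCast (q ^ (t : ℝ)) m,
        ← Real.rpow_mul hq0.le]
    have hexp := rpow_inj hq0 hq1 hmR'
    refine ⟨-m, ?_⟩
    apply Rat.cast_injective (α := ℝ)
    push_cast at hexp ⊢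
    linear_combination -hexp
end

section
/- Let q be real with 0 < q < 1, let r, m be integers with 1 < m ≤ r, and let θ : (ℂ∖{0})^r → ℂ be a multiple theta function θ(a) = ∏_{i=1}^m [(−1)^{δ_i} a^{γ_i} q^{z_i}; q^{t_i}]_∞ with δ_i ∈ {0,1}, exponent vectors γ_1, …, γ_m ∈ ℤ^r linearly independent over ℚ, z_i ∈ ℚ and t_i ∈ ℚ_{>0}. Let k_1, …, k_m be rational numbers, not all zero, and set v = k_1 γ_1 + k_2 γ_2 + ⋯ + k_m γ_m. Then there exist a vector x = (x_1, …, x_r) ∈ ℚ^r and a nonzero rational number ε such that ε k_i is an integer for every i, the vector ε v lies in ℤ^r, and for all a = (a_1, …, a_r) ∈ (ℂ∖{0})^r the contiguous relation θ(a_1 q^{x_1}, …, a_r q^{x_r}) = (−1)^{Σ_{i=1}^m (δ_i + 1) ε k_i} · q^{−Σ_{i=1}^m ( ε z_i k_i + C(ε k_i, 2) t_i )} · a^{−ε v} · θ(a) holds, where C(n,2) = n(n−1)/2. -/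
open Filter

/-- The theta function `[x; Q]_∞ = (x;Q)_∞ (Q/x;Q)_∞`. -/
noncomputable def theta (x Q : ℂ) : ℂ := qPoch x Q * qPoch (Q / x) Q

/-- The multiple theta function
`θ(a) = ∏_{i=1}^m [(-1)^{δ_i} a^{γ_i} q^{z_i}; q^{t_i}]_∞`. -/
noncomputable def mtheta (q : ℝ) {r m : ℕ} (δ : Fin m → ℕ) (γ : Fin m → Fin r → ℤ)
    (z t : Fin m → ℚ) (a : Fin r → ℂ) : ℂ :=
  ∏ i, theta ((-1 : ℂ) ^ (δ i) * (∏ j, a j ^ (γ i j)) * ((q ^ ((z i : ℝ)) : ℝ) : ℂ))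
    ((q ^ ((t i : ℝ)) : ℝ) : ℂ)

lemma hasProd_zero_of_apply_eq_zero {f : ℕ → ℂ} (k0 : ℕ) (h : f k0 = 0) : HasProd f 0 := by
  have he : (fun _ : Finset ℕ => (0:ℂ)) =ᶠ[atTop] fun s => ∏ i ∈ s, f i := by
    filter_upwards [eventually_ge_atTop ({k0} : Finset ℕ)] with s hs
    exact (Finset.prod_eq_zero (hs (Finset.mem_singleton_self k0)) h).symm
  exact Filter.Tendsto.congr' he tendsto_const_nhds

lemma multipliable_qPochTerm (x : ℂ) {Q : ℂ} (hQ : ‖Q‖ < 1) :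
    Multipliable (fun kk : ℕ => 1 - x * Q ^ kk) := by
  by_cases h0 : ∀ kk, 1 - x * Q ^ kk ≠ 0
  · have hg : Summable fun kk : ℕ => (3/2 : ℝ) * (‖x‖ * ‖Q‖ ^ kk) :=
      ((summable_geometric_of_lt_one (norm_nonneg Q) hQ).mul_left ‖x‖).mul_left _
    have hs : Summable fun kk : ℕ => Complex.log (1 - x * Q ^ kk) := by
      apply Summable.of_norm_bounded_eventually_nat hg
      have ht : Tendsto (fun kk : ℕ => ‖x‖ * ‖Q‖ ^ kk) atTop (nhds 0) := by
        simpa using (tendsto_pow_atTop_nhds_zero_of_lt_one (norm_nonneg Q) hQ).const_mul ‖x‖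
      filter_upwards [ht.eventually_le_const (by norm_num : (0:ℝ) < 1/2)] with kk hk
      have hz : ‖-(x * Q ^ kk)‖ ≤ 1/2 := by
        simpa [norm_mul, norm_pow] using hk
      have := Complex.norm_log_one_add_half_le_self hz
      rw [show (1 : ℂ) + -(x * Q ^ kk) = 1 - x * Q ^ kk by ring] at this
      refine this.trans ?_
      rw [mul_le_mul_iff_right₀ (by norm_num : (0:ℝ) < 3/2)]
      simp [norm_mul, norm_pow]
    exact Complex.multipliable_of_summable_log hs
  · push_neg at h0
    obtain ⟨k0, hk0⟩ := h0
    exact ⟨0, hasProd_zero_of_apply_eq_zero k0 hk0⟩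

set_option maxHeartbeats 1000000 in
lemma qPoch_rec (x : ℂ) {Q : ℂ} (hQ : ‖Q‖ < 1) :
    qPoch x Q = (1 - x) * qPoch (x * Q) Q := by
  have hm : Multipliable (fun n : ℕ => 1 - x * Q ^ (n + 1)) :=
    (multipliable_qPochTerm (x * Q) hQ).congr fun b => by ring
  rw [qPoch, tprod_eq_zero_mul' hm, pow_zero, mul_one, qPoch]
  congr 1
  exact tprod_congr fun b => by ring

lemma theta_mul_left {x Q : ℂ} (hx : x ≠ 0) (hQ0 : Q ≠ 0) (hQ : ‖Q‖ < 1) :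
    theta (Q * x) Q = -x⁻¹ * theta x Q := by
  unfold theta
  have h1 : qPoch x Q = (1 - x) * qPoch (x * Q) Q := qPoch_rec x hQ
  have h2 : qPoch (Q / (Q * x)) Q = (1 - x⁻¹) * qPoch (Q / x) Q := by
    rw [show Q / (Q * x) = x⁻¹ by field_simp]
    rw [qPoch_rec x⁻¹ hQ, show x⁻¹ * Q = Q / x by rw [div_eq_mul_inv, mul_comm]]
  rw [h2, h1, show Q * x = x * Q from mul_comm Q x]
  have key : (1 : ℂ) - x⁻¹ = -x⁻¹ * (1 - x) := by
    field_simp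
    ring
  rw [key]; ring

lemma theta_zpow_mul {Q : ℂ} (hQ0 : Q ≠ 0) (hQ : ‖Q‖ < 1) {x : ℂ} (hx : x ≠ 0) :
    ∀ n : ℤ, ∀ c : ℤ, 2 * c = n * (n - 1) →
      theta (Q ^ n * x) Q = (-1) ^ n * x ^ (-n) * Q ^ (-c) * theta x Q := by
  intro n
  induction n using Int.induction_on with
  | zero =>
    intro c hc
    have h0 : c = 0 := by omega
    simp [h0]
  | succ i ih =>
    intro c hc
    have hc' : 2 * (c - i) = (i : ℤ) * (i - 1) := by linarith
    have hxi : Q ^ (i : ℤ) * x ≠ 0 := mul_ne_zero (zpow_ne_zero _ hQ0) hx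
    have hstep : theta (Q ^ ((i : ℤ) + 1) * x) Q = -(Q ^ (i:ℤ) * x)⁻¹ * theta (Q ^ (i:ℤ) * x) Q := by
      rw [show Q ^ ((i : ℤ) + 1) * x = Q * (Q ^ (i:ℤ) * x) by
        rw [zpow_add_one₀ hQ0]; ring]
      exact theta_mul_left hxi hQ0 hQ
    rw [hstep, ih (c - i) hc']
    have e1 : (-1 : ℂ) ^ ((i : ℤ) + 1) = (-1) ^ (i : ℤ) * (-1) := by
      rw [zpow_add_one₀ (by norm_num : (-1:ℂ) ≠ 0)]
    have e2 : x ^ (-((i : ℤ) + 1)) = x ^ (-(i:ℤ)) * x⁻¹ := by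
      rw [show -((i:ℤ)+1) = -(i:ℤ) + (-1) by ring, zpow_add₀ hx, zpow_neg_one]
    have e3 : Q ^ (-c) = Q ^ (-(c - i)) * Q ^ (-(i:ℤ)) := by
      rw [← zpow_add₀ hQ0]; ring_nf
    have e4 : (Q ^ (i:ℤ) * x)⁻¹ = Q ^ (-(i:ℤ)) * x⁻¹ := by
      rw [mul_inv, zpow_neg]
    rw [e1, e2, e3, e4]; ring
  | pred i ih =>
    intro c hc
    have hc' : 2 * (c - i - 1) = (-(i:ℤ)) * (-(i:ℤ) - 1) := by linarith
    have hxi : Q ^ (-(i : ℤ) - 1) * x ≠ 0 := mul_ne_zero (zpow_ne_zero _ hQ0) hx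
    have hstep : theta (Q ^ (-(i : ℤ)) * x) Q
        = -(Q ^ (-(i:ℤ) - 1) * x)⁻¹ * theta (Q ^ (-(i:ℤ) - 1) * x) Q := by
      rw [show Q ^ (-(i : ℤ)) * x = Q * (Q ^ (-(i:ℤ) - 1) * x) by
        rw [show -(i:ℤ) = (-(i:ℤ) - 1) + 1 by ring, zpow_add_one₀ hQ0]; ring]
      exact theta_mul_left hxi hQ0 hQ
    have hsolved : theta (Q ^ (-(i:ℤ) - 1) * x) Q
        = -(Q ^ (-(i:ℤ) - 1) * x) * theta (Q ^ (-(i:ℤ)) * x) Q := by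
      rw [hstep]
      field_simp
    rw [hsolved, ih (c - i - 1) hc']
    have e1 : (-1 : ℂ) ^ (-(i:ℤ)) = (-1) ^ (-(i:ℤ) - 1) * (-1) := by
      rw [← zpow_add_one₀ (by norm_num : (-1:ℂ) ≠ 0), show -(i:ℤ) - 1 + 1 = -(i:ℤ) by ring]
    have e2 : x ^ (-(-(i:ℤ) - 1)) = x ^ (-(-(i:ℤ))) * x := by
      rw [show -(-(i:ℤ) - 1) = -(-(i:ℤ)) + 1 by ring, zpow_add_one₀ hx]
    have e3 : Q ^ (-c) = Q ^ (-(c - i - 1)) * Q ^ (-(i:ℤ) - 1) := by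
      rw [← zpow_add₀ hQ0]; ring_nf
    rw [e1, e2, e3]; ring

lemma matrix_mulVec_surj {m r : ℕ} (M : Matrix (Fin m) (Fin r) ℚ)
    (h : LinearIndependent ℚ (fun i => M i)) : Function.Surjective M.mulVecLin := by
  rw [← LinearMap.range_eq_top]
  apply Submodule.eq_top_of_finrank_eq
  have h1 : M.rank = m := by
    rw [h.rank_matrix, Fintype.card_fin]
  rw [show Module.finrank ℚ (LinearMap.range M.mulVecLin) = M.rank from rfl, h1,
    Module.finrank_fintype_fun_eq_card, Fintype.card_fin]

lemma zpow_finset_sum {ι : Type*} {a : ℂ} (ha : a ≠ 0) (s : Finset ι) (f : ι → ℤ) :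
    a ^ (∑ i ∈ s, f i) = ∏ i ∈ s, a ^ f i := by
  classical
  induction s using Finset.induction with
  | empty => simp
  | insert _ _ h ih => rw [Finset.sum_insert h, Finset.prod_insert h, zpow_add₀ ha, ih]

lemma neg_one_zpow_neg (e : ℤ) : (-1 : ℂ) ^ (-e) = (-1) ^ e := by
  rw [zpow_neg, ← inv_zpow, show ((-1 : ℂ))⁻¹ = -1 by norm_num]

lemma cq_zpow {q : ℝ} (hq0 : 0 < q) (s : ℝ) (e : ℤ) :
    (((q ^ s : ℝ) : ℂ)) ^ e = ((q ^ (s * e) : ℝ) : ℂ) := by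
  rw [← Complex.ofReal_zpow]
  congr 1
  rw [← Real.rpow_intCast (q ^ s) e, ← Real.rpow_mul hq0.le]

lemma cq_sum {q : ℝ} (hq0 : 0 < q) {ι : Type*} (s : Finset ι) (f : ι → ℝ) :
    ∏ i ∈ s, ((q ^ (f i) : ℝ) : ℂ) = ((q ^ (∑ i ∈ s, f i) : ℝ) : ℂ) := by
  rw [Real.rpow_sum_of_pos hq0]
  push_cast
  try rfl

/-- Every nonzero rational combination `v = k_1 γ_1 + ⋯ + k_m γ_m` of the exponent
vectors gives rise to a contiguous relation for the multiple theta function. -/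
theorem exists_contiguous_relation (q : ℝ) (hq0 : 0 < q) (hq1 : q < 1)
    (r m : ℕ) (hm : 1 < m) (hmr : m ≤ r)
    (δ : Fin m → ℕ) (hδ : ∀ i, δ i = 0 ∨ δ i = 1)
    (γ : Fin m → Fin r → ℤ)
    (hγ : LinearIndependent ℚ (fun i => fun j => (γ i j : ℚ)))
    (z : Fin m → ℚ) (t : Fin m → ℚ) (ht : ∀ i, 0 < t i)
    (k : Fin m → ℚ) (hk : ∃ i, k i ≠ 0) :
    ∃ (x : Fin r → ℚ) (ε : ℚ), ε ≠ 0 ∧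
      ∃ (n : Fin m → ℤ) (V : Fin r → ℤ),
        (∀ i, ε * k i = (n i : ℚ)) ∧
        (∀ j, ε * (∑ i, k i * (γ i j : ℚ)) = (V j : ℚ)) ∧
        ∀ a : Fin r → ℂ, (∀ j, a j ≠ 0) →
          mtheta q δ γ z t (fun j => a j * ((q ^ ((x j : ℝ)) : ℝ) : ℂ))
            = (-1 : ℂ) ^ (∑ i, ((δ i : ℤ) + 1) * n i)
              * ((q ^ ((-(∑ i, (ε * z i * k i
                    + ((n i : ℚ) * ((n i : ℚ) - 1) / 2) * t i)) : ℚ) : ℝ) : ℝ) : ℂ)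
              * (∏ j, a j ^ (-(V j)))
              * mtheta q δ γ z t a := by
  classical
  -- the denominator-clearing factor ε and the integers n i
  set ε : ℚ := ∏ i, ((k i).den : ℚ) with hεdef
  have hεpos : 0 < ε := Finset.prod_pos fun i _ => by positivity
  set n : Fin m → ℤ := fun i => (k i).num * ∏ j ∈ Finset.univ.erase i, ((k j).den : ℤ) with hndef
  have hn : ∀ i, ε * k i = (n i : ℚ) := by
    intro i
    rw [hndef, hεdef]
    push_cast
    rw [← Finset.mul_prod_erase Finset.univ (fun j => ((k j).den : ℚ)) (Finset.mem_univ i),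
      mul_comm (((k i).den : ℚ)) _, mul_assoc, mul_comm (((k i).den : ℚ)) (k i),
      Rat.mul_den_eq_num, mul_comm]
  -- the integer vector V
  set V : Fin r → ℤ := fun j => ∑ i, n i * γ i j with hVdef
  have hV : ∀ j, ε * (∑ i, k i * (γ i j : ℚ)) = (V j : ℚ) := by
    intro j
    rw [hVdef, Finset.mul_sum]
    push_cast
    refine Finset.sum_congr rfl fun i _ => ?_
    rw [← mul_assoc, hn i]
  -- the half-integers c i
  have hceven : ∀ i : Fin m, ∃ c : ℤ, 2 * c = n i * (n i - 1) := by
    intro i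
    obtain ⟨c, hc⟩ := Int.even_mul_succ_self (n i - 1)
    exact ⟨c, by linarith⟩
  choose c hc using hceven
  -- the shift vector x
  obtain ⟨x, hx⟩ := matrix_mulVec_surj (Matrix.of fun i j => ((γ i j : ℚ)))
    hγ (fun i => (n i : ℚ) * t i)
  have hx' : ∀ i, ∑ j, (γ i j : ℚ) * x j = (n i : ℚ) * t i := by
    intro i
    have := congrFun hx i
    simpa [Matrix.mulVecLin, Matrix.mulVec, dotProduct] using this
  refine ⟨x, ε, hεpos.ne', n, V, hn, hV, ?_⟩
  intro a ha
  -- notation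
  set Qi : Fin m → ℂ := fun i => ((q ^ ((t i : ℝ)) : ℝ) : ℂ) with hQidef
  set A : Fin m → ℂ := fun i =>
    (-1 : ℂ) ^ (δ i) * (∏ j, a j ^ (γ i j)) * ((q ^ ((z i : ℝ)) : ℝ) : ℂ) with hAdef
  have hQi0 : ∀ i, Qi i ≠ 0 := fun i =>
    Complex.ofReal_ne_zero.mpr (Real.rpow_pos_of_pos hq0 _).ne'
  have hQi1 : ∀ i, ‖Qi i‖ < 1 := by
    intro i
    rw [hQidef]
    simp only [Complex.norm_real, Real.norm_eq_abs,
      abs_of_pos (Real.rpow_pos_of_pos hq0 _)]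
    exact Real.rpow_lt_one hq0.le hq1 (by exact_mod_cast ht i)
  have hA0 : ∀ i, A i ≠ 0 := by
    intro i
    refine mul_ne_zero (mul_ne_zero (pow_ne_zero _ (by norm_num)) ?_)
      (Complex.ofReal_ne_zero.mpr (Real.rpow_pos_of_pos hq0 _).ne')
    exact Finset.prod_ne_zero_iff.mpr fun j _ => zpow_ne_zero _ (ha j)
  -- the argument of each theta factor after the shift
  have hArg : ∀ i,
      (-1 : ℂ) ^ (δ i) * (∏ j, (a j * ((q ^ ((x j : ℝ)) : ℝ) : ℂ)) ^ (γ i j))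
          * ((q ^ ((z i : ℝ)) : ℝ) : ℂ)
        = Qi i ^ (n i) * A i := by
    intro i
    have hsplit : ∏ j, (a j * ((q ^ ((x j : ℝ)) : ℝ) : ℂ)) ^ (γ i j)
        = (∏ j, a j ^ (γ i j)) * ∏ j, (((q ^ ((x j : ℝ)) : ℝ) : ℂ)) ^ (γ i j) := by
      rw [← Finset.prod_mul_distrib]
      exact Finset.prod_congr rfl fun j _ => mul_zpow _ _ _
    have hqpart : ∏ j, (((q ^ ((x j : ℝ)) : ℝ) : ℂ)) ^ (γ i j) = Qi i ^ (n i) := by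
      have h1 : ∀ j, (((q ^ ((x j : ℝ)) : ℝ) : ℂ)) ^ (γ i j)
          = ((q ^ (((x j : ℝ)) * (γ i j : ℤ)) : ℝ) : ℂ) := fun j => cq_zpow hq0 _ _
      rw [Finset.prod_congr rfl fun j _ => h1 j, cq_sum hq0]
      have h2 : ∑ j, ((x j : ℝ)) * ((γ i j : ℤ) : ℝ) = ((t i : ℝ)) * ((n i : ℤ) : ℝ) := by
        have := hx' i
        have h3 : ((∑ j, (γ i j : ℚ) * x j : ℚ) : ℝ) = (((n i : ℚ) * t i : ℚ) : ℝ) := by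
          exact_mod_cast congrArg (fun y : ℚ => (y : ℝ)) this
        push_cast at h3 ⊢
        rw [Finset.sum_congr rfl fun j _ => mul_comm ((x j : ℝ)) ((γ i j : ℝ))]
        linarith [h3]
      rw [h2, ← cq_zpow hq0, hQidef]
    rw [hsplit, hqpart, hAdef]
    ring
  -- per-factor scalar identity
  have hfact : ∀ i : Fin m,
      (-1 : ℂ) ^ (n i) * A i ^ (-(n i)) * Qi i ^ (-(c i))
        = (-1 : ℂ) ^ (((δ i : ℤ) + 1) * n i)
          * ((q ^ (-(((z i : ℝ)) * ((n i : ℤ) : ℝ) + ((t i : ℝ)) * ((c i : ℤ) : ℝ))) : ℝ) : ℂ)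
          * ∏ j, a j ^ (γ i j * (-(n i))) := by
    intro i
    have hAexp : A i ^ (-(n i))
        = (-1 : ℂ) ^ ((δ i : ℤ) * (-(n i))) * (∏ j, a j ^ (γ i j * (-(n i))))
          * ((q ^ (((z i : ℝ)) * ((-(n i) : ℤ) : ℝ)) : ℝ) : ℂ) := by
      rw [hAdef]
      rw [mul_zpow, mul_zpow]
      congr 1
      · congr 1
        · rw [← zpow_natCast ((-1 : ℂ)) (δ i), ← zpow_mul]
        · rw [← Finset.prod_zpow]
          exact Finset.prod_congr rfl fun j _ => by rw [← zpow_mul]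
      · exact cq_zpow hq0 _ _
    rw [hAexp, cq_zpow hq0 ((t i : ℝ)) (-(c i))]
    have hsign : (-1 : ℂ) ^ (n i) * (-1 : ℂ) ^ ((δ i : ℤ) * (-(n i)))
        = (-1 : ℂ) ^ (((δ i : ℤ) + 1) * n i) := by
      rw [show ((δ i : ℤ)) * (-(n i)) = -((δ i : ℤ) * n i) by ring, neg_one_zpow_neg,
        ← zpow_add₀ (by norm_num : (-1 : ℂ) ≠ 0)]
      congr 1
      ring
    have hqmerge : ((q ^ (((z i : ℝ)) * ((-(n i) : ℤ) : ℝ)) : ℝ) : ℂ)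
        * ((q ^ (((t i : ℝ)) * ((-(c i) : ℤ) : ℝ)) : ℝ) : ℂ)
        = ((q ^ (-(((z i : ℝ)) * ((n i : ℤ) : ℝ) + ((t i : ℝ)) * ((c i : ℤ) : ℝ))) : ℝ) : ℂ) := by
      rw [← Complex.ofReal_mul, ← Real.rpow_add hq0]
      congr 2
      push_cast
      ring
    calc (-1 : ℂ) ^ (n i)
          * ((-1 : ℂ) ^ ((δ i : ℤ) * (-(n i))) * (∏ j, a j ^ (γ i j * (-(n i))))
            * ((q ^ (((z i : ℝ)) * ((-(n i) : ℤ) : ℝ)) : ℝ) : ℂ))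
          * ((q ^ (((t i : ℝ)) * ((-(c i) : ℤ) : ℝ)) : ℝ) : ℂ)
        = ((-1 : ℂ) ^ (n i) * (-1 : ℂ) ^ ((δ i : ℤ) * (-(n i))))
          * (((q ^ (((z i : ℝ)) * ((-(n i) : ℤ) : ℝ)) : ℝ) : ℂ)
            * ((q ^ (((t i : ℝ)) * ((-(c i) : ℤ) : ℝ)) : ℝ) : ℂ))
          * ∏ j, a j ^ (γ i j * (-(n i))) := by ring
      _ = _ := by rw [hsign, hqmerge]
  -- now the main computation
  have hLHS : mtheta q δ γ z t (fun j => a j * ((q ^ ((x j : ℝ)) : ℝ) : ℂ))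
      = ∏ i, ((-1 : ℂ) ^ (n i) * A i ^ (-(n i)) * Qi i ^ (-(c i)) * theta (A i) (Qi i)) := by
    rw [mtheta]
    refine Finset.prod_congr rfl fun i _ => ?_
    rw [hArg i]
    exact theta_zpow_mul (hQi0 i) (hQi1 i) (hA0 i) (n i) (c i) (hc i)
  rw [hLHS]
  have hmth : mtheta q δ γ z t a = ∏ i, theta (A i) (Qi i) := rfl
  rw [hmth]
  rw [Finset.prod_mul_distrib]
  congr 1
  rw [Finset.prod_congr rfl fun i _ => hfact i]
  rw [Finset.prod_mul_distrib, Finset.prod_mul_distrib]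
  congr 1
  · congr 1
    · -- signs
      rw [← zpow_finset_sum (by norm_num : (-1 : ℂ) ≠ 0)]
    · -- q-powers
      rw [cq_sum hq0]
      congr 1
      have hz : ∀ i, ε * z i * k i = z i * (n i : ℚ) := by
        intro i
        rw [mul_comm (ε) (z i), mul_assoc, hn i]
      have hcq : ∀ i, ((n i : ℚ) * ((n i : ℚ) - 1) / 2) = (c i : ℚ) := by
        intro i
        have := hc i
        have h2 : (2 : ℚ) * (c i : ℚ) = (n i : ℚ) * ((n i : ℚ) - 1) := by exact_mod_cast this
        linarith
      have : (-(∑ i, (ε * z i * k i + ((n i : ℚ) * ((n i : ℚ) - 1) / 2) * t i)) : ℚ)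
          = -(∑ i, (z i * (n i : ℚ) + (c i : ℚ) * t i)) := by
        congr 1
        exact Finset.sum_congr rfl fun i _ => by rw [hz i, hcq i]
      rw [this]
      push_cast
      congr 1
      rw [← Finset.sum_neg_distrib]
      exact Finset.sum_congr rfl fun i _ => by ring
  · -- a-powers
    rw [Finset.prod_comm]
    refine Finset.prod_congr rfl fun j _ => ?_
    have hVj : -(V j) = ∑ i, γ i j * (-(n i)) := by
      simp only [hVdef]
      rw [← Finset.sum_neg_distrib]
      exact Finset.sum_congr rfl fun i _ => by ring
    rw [hVj, zpow_finset_sum (ha j)]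
end

section
/- Let q be real with 0 < q < 1, let r, m be integers with 1 < m ≤ r, and let θ : (ℂ∖{0})^r → ℂ be a multiple theta function θ(a) = ∏_{i=1}^m [(−1)^{δ_i} a^{γ_i} q^{z_i}; q^{t_i}]_∞ with δ_i ∈ {0,1}, exponent vectors γ_1, …, γ_m ∈ ℤ^r linearly independent over ℚ, z_i ∈ ℚ and t_i ∈ ℚ_{>0}. Suppose θ satisfies a contiguous relation: there exist α ∈ ℤ^r, w ∈ ℤ^r, ρ ∈ {0,1} and s ∈ ℚ such that θ(a_1 q^{α_1}, …, a_r q^{α_r}) = (−1)^ρ · a^{−w} · q^{−s} · θ(a) for all a ∈ (ℂ∖{0})^r. Then there exist integers υ_1, …, υ_m such that w = υ_1 γ_1 + υ_2 γ_2 + ⋯ + υ_m γ_m. -/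
open Complex Matrix

/-! ### Auxiliary lemmas -/

lemma summable_log_factors (x : ℂ) (Q : ℂ) (hQ : ‖Q‖ < 1) :
    Summable (fun k : ℕ => Complex.log (1 - x * Q ^ k)) := by
  have hgeo : Summable (fun k : ℕ => (3/2 : ℝ) * (‖x‖ * ‖Q‖ ^ k)) :=
    (((summable_geometric_of_lt_one (norm_nonneg Q) hQ).mul_left ‖x‖).mul_left (3/2))
  apply Summable.of_norm_bounded_eventually_nat hgeo
  have h0 : Filter.Tendsto (fun k : ℕ => ‖x‖ * ‖Q‖ ^ k) Filter.atTop (nhds 0) := by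
    simpa using (tendsto_pow_atTop_nhds_zero_of_lt_one (norm_nonneg Q) hQ).const_mul ‖x‖
  have hev : ∀ᶠ k : ℕ in Filter.atTop, ‖x‖ * ‖Q‖ ^ k ≤ 1/2 :=
    h0.eventually (eventually_le_nhds (by norm_num))
  filter_upwards [hev] with k hk
  have hxk : ‖x * Q ^ k‖ ≤ 1/2 := by
    rw [norm_mul, norm_pow]; exact hk
  have := Complex.norm_log_one_add_half_le_self (z := -(x * Q ^ k)) (by rwa [norm_neg])
  rw [show (1 : ℂ) + -(x * Q ^ k) = 1 - x * Q ^ k by ring] at this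
  refine this.trans ?_
  rw [norm_neg, norm_mul, norm_pow]

lemma qPoch_ne_zero {x Q : ℂ} (hQ : ‖Q‖ < 1) (h : ∀ k : ℕ, 1 - x * Q ^ k ≠ 0) :
    qPoch x Q ≠ 0 := by
  have key := Complex.cexp_tsum_eq_tprod (f := fun k : ℕ => 1 - x * Q ^ k)
    (fun k => h k) (summable_log_factors x Q hQ)
  have h2 := key
  rw [qPoch, ← h2]
  exact Complex.exp_ne_zero _

lemma theta_I_ne_zero {Q : ℝ} (h0 : 0 < Q) (h1 : Q < 1) : theta I (Q : ℂ) ≠ 0 := by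
  have hn : ‖((Q : ℝ) : ℂ)‖ < 1 := by
    rw [Complex.norm_real, Real.norm_eq_abs, abs_of_pos h0]; exact h1
  apply mul_ne_zero
  · apply qPoch_ne_zero hn
    intro k hk
    apply_fun Complex.im at hk
    simp [← Complex.ofReal_pow, h0.ne'] at hk
  · apply qPoch_ne_zero hn
    intro k hk
    apply_fun Complex.im at hk
    rw [Complex.div_I] at hk
    simp [← Complex.ofReal_pow, h0.ne'] at hk

lemma gamma_surj {r m : ℕ} (γ : Fin m → Fin r → ℤ)
    (hγ : LinearIndependent ℚ (fun i => fun j => (γ i j : ℚ))) (L : Fin m → ℂ) :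
    ∃ d : Fin r → ℂ, ∀ i, ∑ j, (γ i j : ℂ) * d j = L i := by
  classical
  set Γ : Matrix (Fin m) (Fin r) ℚ := Matrix.of (fun i j => (γ i j : ℚ)) with hΓ
  set G : Matrix (Fin m) (Fin m) ℚ := Γ * Γᵀ with hG
  have hGdet : G.det ≠ 0 := by
    intro hdet
    obtain ⟨v, hv0, hv⟩ := Matrix.exists_mulVec_eq_zero_iff.2 hdet
    have h2 : dotProduct v (G.mulVec v) =
        dotProduct (Matrix.vecMul v Γ) (Matrix.vecMul v Γ) := by
      rw [hG, ← Matrix.mulVec_mulVec, dotProduct_mulVec, Matrix.mulVec_transpose]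
    rw [hv, dotProduct_zero] at h2
    have hu : Matrix.vecMul v Γ = 0 := by
      have hsq : ∑ j, (Matrix.vecMul v Γ j) ^ 2 = 0 := by
        rw [← h2.symm]; simp [dotProduct, sq]
      funext j
      have := (Finset.sum_eq_zero_iff_of_nonneg (fun j _ => sq_nonneg _)).1 hsq j (Finset.mem_univ j)
      exact pow_eq_zero_iff (n := 2) (by norm_num) |>.1 this
    apply hv0
    funext i
    refine Fintype.linearIndependent_iff.1 hγ v ?_ i
    funext j
    have := congrFun hu j
    simpa [Matrix.vecMul, dotProduct, mul_comm, hΓ] using this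
  set ΓC : Matrix (Fin m) (Fin r) ℂ := Γ.map (Rat.castHom ℂ) with hΓC
  have hGC : IsUnit (G.map (Rat.castHom ℂ) : Matrix (Fin m) (Fin m) ℂ) := by
    rw [Matrix.isUnit_iff_isUnit_det]
    have : (G.map (Rat.castHom ℂ)).det = ((Rat.castHom ℂ) : ℚ →+* ℂ) G.det := by
      rw [RingHom.map_det]; rfl
    rw [this]
    simpa using hGdet
  obtain ⟨y, hy⟩ := (Matrix.mulVec_surjective_iff_isUnit.2 hGC) L
  refine ⟨(ΓC)ᵀ.mulVec y, fun i => ?_⟩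
  have : (ΓC.mulVec ((ΓC)ᵀ.mulVec y)) i = L i := by
    rw [Matrix.mulVec_mulVec]
    rw [show ΓC * (ΓC)ᵀ = G.map (Rat.castHom ℂ) by
      rw [hΓC, ← Matrix.transpose_map, ← Matrix.map_mul, hG]]
    rw [hy]
  rw [← this]
  simp [Matrix.mulVec, dotProduct, hΓC, hΓ]

lemma prod_exp_zpow {r : ℕ} (e : Fin r → ℂ) (g : Fin r → ℤ) :
    ∏ j, (Complex.exp (e j)) ^ (g j) = Complex.exp (∑ j, (g j : ℂ) * e j) := by
  rw [Complex.exp_sum]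
  exact Finset.prod_congr rfl fun j _ => (Complex.exp_int_mul (e j) (g j)).symm

lemma prod_mul_zpow {r : ℕ} (b e : Fin r → ℂ) (g : Fin r → ℤ) :
    ∏ j, (b j * Complex.exp (e j)) ^ (g j)
      = (∏ j, (b j) ^ (g j)) * Complex.exp (∑ j, (g j : ℂ) * e j) := by
  rw [← prod_exp_zpow e g, ← Finset.prod_mul_distrib]
  exact Finset.prod_congr rfl fun j _ => mul_zpow _ _ _

lemma mtheta_mul_exp (q : ℝ) {r m : ℕ} (δ : Fin m → ℕ) (γ : Fin m → Fin r → ℤ)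
    (z t : Fin m → ℚ) (b d : Fin r → ℂ)
    (hd : ∀ i, Complex.exp (∑ j, (γ i j : ℂ) * d j) = 1) :
    mtheta q δ γ z t (fun j => b j * Complex.exp (d j)) = mtheta q δ γ z t b := by
  unfold mtheta
  apply Finset.prod_congr rfl
  intro i _
  congr 1
  rw [prod_mul_zpow, hd i, mul_one]

/-! ### Main theorem -/

/-- If a multiple theta function satisfies a contiguous relation with exponent
vector `w`, then `w` is an integer combination of the exponent vectors
`γ_1, …, γ_m` of its factors. -/
theorem contiguous_exponent_mem_lattice (q : ℝ) (hq0 : 0 < q) (hq1 : q < 1)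
    (r m : ℕ) (hm : 1 < m) (hmr : m ≤ r)
    (δ : Fin m → ℕ) (hδ : ∀ i, δ i = 0 ∨ δ i = 1)
    (γ : Fin m → Fin r → ℤ)
    (hγ : LinearIndependent ℚ (fun i => fun j => (γ i j : ℚ)))
    (z : Fin m → ℚ) (t : Fin m → ℚ) (ht : ∀ i, 0 < t i)
    (α w : Fin r → ℤ) (ρ : ℕ) (hρ : ρ = 0 ∨ ρ = 1) (s : ℚ)
    (hrel : ∀ a : Fin r → ℂ, (∀ j, a j ≠ 0) →
      mtheta q δ γ z t (fun j => a j * ((q : ℂ) ^ (α j)))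
        = (-1 : ℂ) ^ ρ * (∏ j, a j ^ (-(w j))) * ((q ^ (-(s : ℝ)) : ℝ) : ℂ)
            * mtheta q δ γ z t a) :
    ∃ υ : Fin m → ℤ, ∀ j, w j = ∑ i, υ i * γ i j := by
  classical
  have hqz0 : ∀ i, ((q ^ ((z i : ℝ)) : ℝ) : ℂ) ≠ 0 := fun i =>
    Complex.ofReal_ne_zero.2 (Real.rpow_pos_of_pos hq0 _).ne'
  have hQ0 : ∀ i, (0:ℝ) < q ^ ((t i : ℝ)) := fun i => Real.rpow_pos_of_pos hq0 _
  have hQ1 : ∀ i, q ^ ((t i : ℝ)) < 1 := fun i =>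
    Real.rpow_lt_one hq0.le hq1 (by exact_mod_cast ht i)
  have hsgn : ∀ i, ((-1 : ℂ)) ^ (δ i) * ((-1 : ℂ)) ^ (δ i) = 1 := by
    intro i; rcases hδ i with h | h <;> simp [h]
  have hT0 : ∀ i, (-1 : ℂ) ^ (δ i) * I * (((q ^ ((z i : ℝ)) : ℝ) : ℂ))⁻¹ ≠ 0 := fun i =>
    mul_ne_zero (mul_ne_zero (pow_ne_zero _ (by norm_num)) I_ne_zero) (inv_ne_zero (hqz0 i))
  obtain ⟨c, hc⟩ := gamma_surj γ hγ
    (fun i => Complex.log ((-1 : ℂ) ^ (δ i) * I * (((q ^ ((z i : ℝ)) : ℝ) : ℂ))⁻¹))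
  set a0 : Fin r → ℂ := fun j => Complex.exp (c j) with ha0
  have ha00 : ∀ j, a0 j ≠ 0 := fun j => Complex.exp_ne_zero _
  have hprod0 : ∀ i, (∏ j, (a0 j) ^ (γ i j))
      = (-1 : ℂ) ^ (δ i) * I * (((q ^ ((z i : ℝ)) : ℝ) : ℂ))⁻¹ := by
    intro i
    rw [ha0, prod_exp_zpow, hc i, Complex.exp_log (hT0 i)]
  have harg0 : ∀ i, (-1 : ℂ) ^ (δ i) * (∏ j, (a0 j) ^ (γ i j)) * ((q ^ ((z i : ℝ)) : ℝ) : ℂ)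
      = I := by
    intro i
    rw [hprod0 i]
    rw [show (-1 : ℂ) ^ (δ i) * ((-1 : ℂ) ^ (δ i) * I * (((q ^ ((z i : ℝ)) : ℝ) : ℂ))⁻¹)
        * ((q ^ ((z i : ℝ)) : ℝ) : ℂ)
        = ((-1 : ℂ) ^ (δ i) * (-1 : ℂ) ^ (δ i)) * I
          * ((((q ^ ((z i : ℝ)) : ℝ) : ℂ))⁻¹ * ((q ^ ((z i : ℝ)) : ℝ) : ℂ)) by ring]
    rw [hsgn i, inv_mul_cancel₀ (hqz0 i), one_mul, mul_one]
  have hM0 : mtheta q δ γ z t a0 ≠ 0 := by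
    unfold mtheta
    rw [Finset.prod_ne_zero_iff]
    intro i _
    rw [harg0 i]
    exact theta_I_ne_zero (hQ0 i) (hQ1 i)
  have hqs : ((q ^ (-(s : ℝ)) : ℝ) : ℂ) ≠ 0 :=
    Complex.ofReal_ne_zero.2 (Real.rpow_pos_of_pos hq0 _).ne'
  have hρ0 : ((-1 : ℂ)) ^ ρ ≠ 0 := pow_ne_zero _ (by norm_num)
  -- The key fact extracted from the contiguous relation.
  have factF : ∀ d : Fin r → ℂ, (∀ i, Complex.exp (∑ j, (γ i j : ℂ) * d j) = 1) →
      Complex.exp (∑ j, (w j : ℂ) * d j) = 1 := by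
    intro d hd
    have h0 := hrel a0 ha00
    set a1 : Fin r → ℂ := fun j => a0 j * Complex.exp (d j) with ha1
    have ha10 : ∀ j, a1 j ≠ 0 := fun j => mul_ne_zero (ha00 j) (Complex.exp_ne_zero _)
    have h1 := hrel a1 ha10
    have e1 : mtheta q δ γ z t a1 = mtheta q δ γ z t a0 :=
      mtheta_mul_exp q δ γ z t a0 d hd
    have e2 : mtheta q δ γ z t (fun j => a1 j * ((q : ℂ) ^ (α j)))
        = mtheta q δ γ z t (fun j => a0 j * ((q : ℂ) ^ (α j))) := by
      rw [show (fun j => a1 j * ((q : ℂ) ^ (α j)))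
          = fun j => (a0 j * ((q : ℂ) ^ (α j))) * Complex.exp (d j) by
        funext j; rw [ha1]; ring]
      exact mtheta_mul_exp q δ γ z t _ d hd
    rw [e2, h0, e1] at h1
    have step1 := mul_right_cancel₀ hM0 h1
    have step2 := mul_right_cancel₀ hqs step1
    have hP : (∏ j, (a0 j) ^ (-(w j))) = (∏ j, (a1 j) ^ (-(w j))) :=
      mul_left_cancel₀ hρ0 step2
    have hP1 : (∏ j, (a1 j) ^ (-(w j)))
        = (∏ j, (a0 j) ^ (-(w j))) * Complex.exp (∑ j, ((-(w j) : ℤ) : ℂ) * d j) :=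
      prod_mul_zpow a0 d (fun j => -(w j))
    have hP0 : (∏ j, (a0 j) ^ (-(w j))) ≠ 0 :=
      Finset.prod_ne_zero_iff.2 (fun j _ => zpow_ne_zero _ (ha00 j))
    have hE : Complex.exp (∑ j, ((-(w j) : ℤ) : ℂ) * d j) = 1 := by
      apply mul_left_cancel₀ hP0
      rw [mul_one, ← hP1, ← hP]
    have hsum : ∑ j, ((-(w j) : ℤ) : ℂ) * d j = -(∑ j, (w j : ℂ) * d j) := by
      rw [← Finset.sum_neg_distrib]
      apply Finset.sum_congr rfl
      intro j _
      push_cast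
      ring
    rw [hsum, Complex.exp_neg] at hE
    exact inv_eq_one.1 hE
  -- choose dual vectors
  have hvex := fun i : Fin m => gamma_surj γ hγ
    (fun l => if l = i then (2 * (Real.pi : ℂ) * I) else 0)
  choose v hv using hvex
  have hexp1 : ∀ i, Complex.exp (∑ j, (w j : ℂ) * v i j) = 1 := by
    intro i
    apply factF
    intro l
    rw [hv i l]
    split_ifs
    · exact Complex.exp_two_pi_mul_I
    · exact Complex.exp_zero
  have hint : ∀ i, ∃ n : ℤ, ∑ j, (w j : ℂ) * v i j = n * (2 * (Real.pi : ℂ) * I) :=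
    fun i => Complex.exp_eq_one_iff.1 (hexp1 i)
  choose υ hυ using hint
  -- kernel directions pair to zero
  have hker : ∀ d : Fin r → ℂ, (∀ i, ∑ j, (γ i j : ℂ) * d j = 0) →
      ∑ j, (w j : ℂ) * d j = 0 := by
    intro d hd
    by_contra hS
    have hl : ∀ lam : ℂ, Complex.exp (lam * ∑ j, (w j : ℂ) * d j) = 1 := by
      intro lam
      have hpre : ∀ i, Complex.exp (∑ j, (γ i j : ℂ) * (lam * d j)) = 1 := by
        intro i
        rw [show ∑ j, (γ i j : ℂ) * (lam * d j) = lam * ∑ j, (γ i j : ℂ) * d j by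
          rw [Finset.mul_sum]; apply Finset.sum_congr rfl; intros; ring]
        rw [hd i, mul_zero, Complex.exp_zero]
      have := factF (fun j => lam * d j) hpre
      rw [show ∑ j, (w j : ℂ) * (lam * d j) = lam * ∑ j, (w j : ℂ) * d j by
        rw [Finset.mul_sum]; apply Finset.sum_congr rfl; intros; ring] at this
      exact this
    have hbad := hl (((Real.pi : ℂ) * I) / (∑ j, (w j : ℂ) * d j))
    rw [div_mul_cancel₀ _ hS, Complex.exp_pi_mul_I] at hbad
    norm_num at hbad
  -- finish
  have h2πI : (2 * (Real.pi : ℂ) * I) ≠ 0 := by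
    simp [Real.pi_ne_zero, I_ne_zero]
  refine ⟨υ, fun j0 => ?_⟩
  set d : Fin r → ℂ :=
    fun j => (if j = j0 then (2 * (Real.pi : ℂ) * I) else 0) - ∑ i, (γ i j0 : ℂ) * v i j
    with hdd
  have hswap : ∀ (u : Fin r → ℂ),
      ∑ j, u j * (∑ i, (γ i j0 : ℂ) * v i j)
        = ∑ i, (γ i j0 : ℂ) * (∑ j, u j * v i j) := by
    intro u
    simp_rw [Finset.mul_sum]
    rw [Finset.sum_comm]
    apply Finset.sum_congr rfl
    intro i _
    apply Finset.sum_congr rfl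
    intro j _
    ring
  have hker_d : ∀ l, ∑ j, (γ l j : ℂ) * d j = 0 := by
    intro l
    simp only [hdd, mul_sub]
    rw [Finset.sum_sub_distrib]
    have e1 : ∑ j, (γ l j : ℂ) * (if j = j0 then (2 * (Real.pi : ℂ) * I) else 0)
        = (γ l j0 : ℂ) * (2 * (Real.pi : ℂ) * I) := by
      simp [mul_ite, mul_zero]
    have e2 : ∑ j, (γ l j : ℂ) * (∑ i, (γ i j0 : ℂ) * v i j)
        = (γ l j0 : ℂ) * (2 * (Real.pi : ℂ) * I) := by
      rw [hswap (fun j => (γ l j : ℂ))]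
      simp_rw [hv]
      simp [mul_ite, mul_zero]
    rw [e1, e2, sub_self]
  have h2 := hker d hker_d
  simp only [hdd, mul_sub] at h2
  rw [Finset.sum_sub_distrib] at h2
  have e1 : ∑ j, (w j : ℂ) * (if j = j0 then (2 * (Real.pi : ℂ) * I) else 0)
      = (w j0 : ℂ) * (2 * (Real.pi : ℂ) * I) := by
    simp [mul_ite, mul_zero]
  have e2 : ∑ j, (w j : ℂ) * (∑ i, (γ i j0 : ℂ) * v i j)
      = (∑ i, (υ i : ℂ) * (γ i j0 : ℂ)) * (2 * (Real.pi : ℂ) * I) := by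
    rw [hswap (fun j => (w j : ℂ))]
    simp_rw [hυ]
    rw [Finset.sum_mul]
    apply Finset.sum_congr rfl
    intro i _
    ring
  rw [e1, e2, sub_eq_zero] at h2
  have hfin := mul_right_cancel₀ h2πI h2
  exact_mod_cast hfin
end
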